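/- arXiv:2504.06522 — 2 statements merged into one kernel-verified Lean document; each statement's English description precedes it below -/
import Mathlib

section
/- Let σ^a : T_a → T be a codegeneracy map and let δ^e : T' → T be a coface map that does not eliminate the edge a. Then there is an induced coface map δ^e : T'_a → T_a, and the square commutes: σ^a ∘ δ^e = δ^e ∘ σ^a as graphical maps T'_a → T. -/
/-!  A formalization of the graphical category of finite (connected) multigraphs
with legs, loops and parallel edges, following the half-edge encoding:
a graph is given by a finite set of vertices, a finite set of half-edges,
an involution pairing the two halves of an edge (legs and free edges have a
fixed or unattached half), and an attachment map.  Graphical maps are encoded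
by their action on (half-)edges together with the assignment of an embedded
subgraph (given by its vertex set and its ι-closed set of half-edges) to each
vertex; `PreGMap.EqOn G f g` is equality of graphical maps out of `G`. -/

structure HalfEdgeGraph where
  V : Finset ℕ
  H : Finset ℕ
  ι : ℕ → ℕ
  att : ℕ → Option ℕ

namespace HalfEdgeGraph

/-- Two vertices are adjacent when some edge joins them. -/
def Adj (G : HalfEdgeGraph) (v w : ℕ) : Prop :=
  ∃ h ∈ G.H, G.att h = some v ∧ G.att (G.ι h) = some w

/-- Connectedness of a graph. -/
def Connected (G : HalfEdgeGraph) : Prop :=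
  ∀ v ∈ G.V, ∀ w ∈ G.V, Relation.ReflTransGen G.Adj v w

/-- Well-formedness: the involution and the attachment are internal to the
graph, and the graph is connected (graphs are finite connected multigraphs). -/
def Wf (G : HalfEdgeGraph) : Prop :=
  (∀ h ∈ G.H, G.ι h ∈ G.H) ∧
  (∀ h ∈ G.H, G.ι (G.ι h) = h) ∧
  (∀ h ∈ G.H, ∀ v, G.att h = some v → v ∈ G.V) ∧
  G.Connected

/-- `h` is (a half of) an inner edge: both ends are attached to vertices. -/
def IsInnerEdge (G : HalfEdgeGraph) (h : ℕ) : Prop :=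
  h ∈ G.H ∧ h ≠ G.ι h ∧ (G.att h).isSome ∧ (G.att (G.ι h)).isSome

/-- `h` is (a half of) a loop: an edge from a vertex to itself. -/
def IsLoop (G : HalfEdgeGraph) (h : ℕ) : Prop :=
  h ∈ G.H ∧ h ≠ G.ι h ∧ ∃ v, G.att h = some v ∧ G.att (G.ι h) = some v

/-- The number of non-leg edges incident to `v` (a loop counts once). -/
def nonLegEdgeCount (G : HalfEdgeGraph) (v : ℕ) : ℕ :=
  (G.H.filter fun h => G.att h = some v ∧ (G.att (G.ι h)).isSome ∧ G.att (G.ι h) ≠ some v).card +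
  (G.H.filter fun h => G.att h = some v ∧ G.att (G.ι h) = some v ∧ h ≠ G.ι h).card / 2

/-- An outer vertex: at most one incident non-leg edge. -/
def IsOuterVertex (G : HalfEdgeGraph) (v : ℕ) : Prop :=
  v ∈ G.V ∧ G.nonLegEdgeCount v ≤ 1

/-- The corolla at `v`, as an embedded subgraph (vertex set and half-edges). -/
def corolla (G : HalfEdgeGraph) (v : ℕ) : Finset ℕ × Finset ℕ :=
  ({v}, G.H.filter fun h => G.att h = some v ∨ G.att (G.ι h) = some v)

/-- `G/b`: contract the (non-loop) inner edge `b`, merging its two endpoints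
into the single vertex `min x y`. -/
def contract (G : HalfEdgeGraph) (b : ℕ) : HalfEdgeGraph :=
  let x := (G.att b).getD 0
  let y := (G.att (G.ι b)).getD 0
  let z := min x y
  let H' := G.H.filter fun h => h ≠ b ∧ h ≠ G.ι b
  { V := insert z ((G.V.erase x).erase y)
    H := H'
    ι := fun h => if h ∈ H' then G.ι h else h
    att := fun h => if h ∈ H' then
        (if G.att h = some x ∨ G.att h = some y then some z else G.att h) else none }

/-- `G/v`: delete the (outer) vertex `v` together with its legs and loops;
edges joining `v` to other vertices become legs. -/
def delVertex (G : HalfEdgeGraph) (v : ℕ) : HalfEdgeGraph :=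
  let H' := G.H.filter fun h =>
    ¬ ((G.att h = some v ∨ G.att (G.ι h) = some v) ∧
       (G.att h = some v ∨ G.att h = none) ∧
       (G.att (G.ι h) = some v ∨ G.att (G.ι h) = none))
  { V := G.V.erase v
    H := H'
    ι := fun h => if h ∈ H' then G.ι h else h
    att := fun h => if h ∈ H' then (if G.att h = some v then none else G.att h) else none }

/-- `G/ℓ`: snip the loop (or cut the edge) `l` into two legs, with fresh
half-edges `a` and `b` as the new free ends. -/
def snip (G : HalfEdgeGraph) (l a b : ℕ) : HalfEdgeGraph :=
  let H' := insert a (insert b G.H)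
  { V := G.V
    H := H'
    ι := fun h => if h ∈ H' then
        (if h = l then a else if h = a then l else
         if h = G.ι l then b else if h = b then G.ι l else G.ι h) else h
    att := fun h => if h ∈ H' then (if h = a ∨ h = b then none else G.att h) else none }

/-- `G_b`: subdivide the edge `b` by one new bivalent vertex `u`,
splitting `b` into the two edges `{b, n₁}` and `{n₂, ι b}`. -/
def subdiv (G : HalfEdgeGraph) (b u n₁ n₂ : ℕ) : HalfEdgeGraph :=
  let H' := insert n₁ (insert n₂ G.H)
  { V := insert u G.V
    H := H'
    ι := fun h => if h ∈ H' then
        (if h = b then n₁ else if h = n₁ then b else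
         if h = n₂ then (if G.ι b = b then n₂ else G.ι b) else
         if h = G.ι b then n₂ else G.ι h) else h
    att := fun h => if h ∈ H' then (if h = n₁ ∨ h = n₂ then some u else G.att h) else none }

/-- Validity of the data of a subdivision: `b` is an edge and the new names are fresh. -/
def IsDegen (G : HalfEdgeGraph) (b u n₁ n₂ : ℕ) : Prop :=
  b ∈ G.H ∧ u ∉ G.V ∧ n₁ ∉ G.H ∧ n₂ ∉ G.H ∧ n₁ ≠ n₂

end HalfEdgeGraph

/-- The data of a graphical map: a map on half-edges (inducing the map `f₀` on
edges) and, for each vertex, an embedded subgraph of the target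
(its vertex set together with its set of half-edges). -/
structure PreGMap where
  e : ℕ → ℕ
  vimg : ℕ → Finset ℕ × Finset ℕ

/-- Composition of graphical maps: compose on edges; the embedded subgraph at a
vertex is assembled by substituting the images of the vertices of its image. -/
def PreGMap.comp (g f : PreGMap) : PreGMap where
  e := g.e ∘ f.e
  vimg := fun v =>
    ((f.vimg v).1.biUnion fun w => (g.vimg w).1,
     (f.vimg v).2.image g.e ∪ (f.vimg v).1.biUnion fun w => (g.vimg w).2)

/-- Equality of graphical maps out of `G` (extensional equality of `f₀` and `f₁`). -/
def PreGMap.EqOn (G : HalfEdgeGraph) (f g : PreGMap) : Prop :=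
  (∀ h ∈ G.H, f.e h = g.e h) ∧ ∀ v ∈ G.V, f.vimg v = g.vimg v

namespace HalfEdgeGraph

/-- The identity graphical map of `G`. -/
def idMap (G : HalfEdgeGraph) : PreGMap := ⟨id, G.corolla⟩

/-- The inner coface map `δ^b : G/b → G`: identity on edges, sending the merged
vertex to the embedded barbell subgraph of `G` around `b`, and every other
vertex to its corolla. -/
def innerCoface (G : HalfEdgeGraph) (b : ℕ) : PreGMap :=
  let x := (G.att b).getD 0
  let y := (G.att (G.ι b)).getD 0
  { e := id
    vimg := fun v => if v = min x y then
        ({x, y}, G.H.filter fun h =>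
          G.att h = some x ∨ G.att h = some y ∨
          G.att (G.ι h) = some x ∨ G.att (G.ι h) = some y)
      else G.corolla v }

/-- The outer coface map `δ^v : G/v → G`: identity on edges, every vertex to its corolla. -/
def outerCoface (G : HalfEdgeGraph) (_v : ℕ) : PreGMap := ⟨id, G.corolla⟩

/-- The cosnip map `δ^ℓ : G/ℓ → G`: both new legs are sent to the loop `l`,
identity on vertices. -/
def cosnip (G : HalfEdgeGraph) (l a b : ℕ) : PreGMap :=
  { e := fun h => if h = a then G.ι l else if h = b then l else h
    vimg := G.corolla }

/-- The codegeneracy map `σ^b : G_b → G`: the two halves of the subdivided edge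
are sent to `b`, the new bivalent vertex to the edge graph `η_b`, and every
other vertex to its corolla. -/
def codegeneracy (G : HalfEdgeGraph) (b u n₁ n₂ : ℕ) : PreGMap :=
  { e := fun h => if h = n₁ then G.ι b else if h = n₂ then b else h
    vimg := fun v => if v = u then ((∅ : Finset ℕ), ({b, G.ι b} : Finset ℕ))
      else G.corolla v }

/-- The conditions for `f` to be a graphical map `G → G'`: it maps edges to
edges, each vertex to an embedded subgraph of `G'`, the vertex sets of the
images are disjoint and together exhaust the vertices of `G'`, and boundaries
match: each half-edge at `v` is sent into the subgraph at `v`. -/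
def IsGMap (G G' : HalfEdgeGraph) (f : PreGMap) : Prop :=
  (∀ h ∈ G.H, f.e h ∈ G'.H ∧ (f.e (G.ι h) = f.e h ∨ f.e (G.ι h) = G'.ι (f.e h))) ∧
  (∀ v ∈ G.V, (f.vimg v).1 ⊆ G'.V ∧ (f.vimg v).2 ⊆ G'.H) ∧
  (∀ v ∈ G.V, ∀ w ∈ G.V, v ≠ w → Disjoint (f.vimg v).1 (f.vimg w).1) ∧
  G.V.biUnion (fun v => (f.vimg v).1) = G'.V ∧
  (∀ v ∈ G.V, ∀ h ∈ G.H, G.att h = some v → f.e h ∈ (f.vimg v).2)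

end HalfEdgeGraph

/-- The three kinds of coface maps: inner cofaces, outer cofaces, and cosnips. -/
inductive CofaceKind where
  | inner (e : ℕ)
  | outer (v : ℕ)
  | snip (l a b : ℕ)

namespace HalfEdgeGraph

/-- The source of the coface map of kind `k` into `G`. -/
def cofaceSource (G : HalfEdgeGraph) : CofaceKind → HalfEdgeGraph
  | .inner e => G.contract e
  | .outer v => G.delVertex v
  | .snip l a b => G.snip l a b

/-- The coface map of kind `k` into `G`. -/
def cofaceMap (G : HalfEdgeGraph) : CofaceKind → PreGMap
  | .inner e => G.innerCoface e
  | .outer v => G.outerCoface v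
  | .snip l a b => G.cosnip l a b

/-- Validity of a coface map into `G`: inner cofaces contract non-loop inner
edges, outer cofaces delete outer vertices, cosnips snip loops (with fresh
names, leaving the graph connected). -/
def IsCoface (G : HalfEdgeGraph) : CofaceKind → Prop
  | .inner e => G.IsInnerEdge e ∧ ¬ G.IsLoop e
  | .outer v => G.IsOuterVertex v
  | .snip l a b => G.IsLoop l ∧ a ∉ G.H ∧ b ∉ G.H ∧ a ≠ b ∧ (G.snip l a b).Connected

end HalfEdgeGraph

/-- `CofaceSeq G₁ G₂ f`: `f : G₁ → G₂` is a composite of a sequence of coface maps. -/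
inductive CofaceSeq : HalfEdgeGraph → HalfEdgeGraph → PreGMap → Prop where
  | nil (G : HalfEdgeGraph) : CofaceSeq G G G.idMap
  | cons {G₁ G₂ : HalfEdgeGraph} {f : PreGMap} (k : CofaceKind) (hk : G₂.IsCoface k)
      (h : CofaceSeq G₁ (G₂.cofaceSource k) f) :
      CofaceSeq G₁ G₂ ((G₂.cofaceMap k).comp f)

/-- `DegenSeq G₁ G₂ f`: `f : G₁ → G₂` is a composite of a sequence of codegeneracy maps. -/
inductive DegenSeq : HalfEdgeGraph → HalfEdgeGraph → PreGMap → Prop where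
  | nil (G : HalfEdgeGraph) : DegenSeq G G G.idMap
  | cons {G₁ G₂ : HalfEdgeGraph} {f : PreGMap} (b u n₁ n₂ : ℕ) (hb : G₂.IsDegen b u n₁ n₂)
      (h : DegenSeq G₁ (G₂.subdiv b u n₁ n₂) f) :
      DegenSeq G₁ G₂ ((G₂.codegeneracy b u n₁ n₂).comp f)

/-- `ElemSeq G₁ G₂ f`: `f : G₁ → G₂` is an arbitrary composite of coface and
codegeneracy maps. -/
inductive ElemSeq : HalfEdgeGraph → HalfEdgeGraph → PreGMap → Prop where
  | nil (G : HalfEdgeGraph) : ElemSeq G G G.idMap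
  | coface {G₁ G₂ : HalfEdgeGraph} {f : PreGMap} (k : CofaceKind) (hk : G₂.IsCoface k)
      (h : ElemSeq G₁ (G₂.cofaceSource k) f) :
      ElemSeq G₁ G₂ ((G₂.cofaceMap k).comp f)
  | degen {G₁ G₂ : HalfEdgeGraph} {f : PreGMap} (b u n₁ n₂ : ℕ) (hb : G₂.IsDegen b u n₁ n₂)
      (h : ElemSeq G₁ (G₂.subdiv b u n₁ n₂) f) :
      ElemSeq G₁ G₂ ((G₂.codegeneracy b u n₁ n₂).comp f)


section Aux
open Finset

namespace HalfEdgeGraph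

lemma ext' {G G' : HalfEdgeGraph} (hV : G.V = G'.V) (hH : G.H = G'.H)
    (hι : ∀ h, G.ι h = G'.ι h) (ha : ∀ h, G.att h = G'.att h) : G = G' := by
  cases G; cases G'
  simp only [HalfEdgeGraph.mk.injEq]
  exact ⟨hV, hH, funext hι, funext ha⟩

lemma mem_contract_H (G : HalfEdgeGraph) (b h : ℕ) :
    h ∈ (G.contract b).H ↔ h ∈ G.H ∧ h ≠ b ∧ h ≠ G.ι b := by
  simp [HalfEdgeGraph.contract]

lemma contract_ι (G : HalfEdgeGraph) (b h : ℕ) :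
    (G.contract b).ι h = if h ∈ G.H ∧ h ≠ b ∧ h ≠ G.ι b then G.ι h else h := by
  simp [HalfEdgeGraph.contract, Finset.mem_filter]

lemma contract_att (G : HalfEdgeGraph) (b h : ℕ) :
    (G.contract b).att h = if h ∈ G.H ∧ h ≠ b ∧ h ≠ G.ι b then
      (if G.att h = some ((G.att b).getD 0) ∨ G.att h = some ((G.att (G.ι b)).getD 0)
        then some (min ((G.att b).getD 0) ((G.att (G.ι b)).getD 0)) else G.att h) else none := by
  simp [HalfEdgeGraph.contract, Finset.mem_filter]

lemma contract_V (G : HalfEdgeGraph) (b : ℕ) :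
    (G.contract b).V = insert (min ((G.att b).getD 0) ((G.att (G.ι b)).getD 0))
      ((G.V.erase ((G.att b).getD 0)).erase ((G.att (G.ι b)).getD 0)) := rfl

lemma mem_subdiv_H (G : HalfEdgeGraph) (b u n₁ n₂ h : ℕ) :
    h ∈ (G.subdiv b u n₁ n₂).H ↔ h = n₁ ∨ h = n₂ ∨ h ∈ G.H := by
  simp [HalfEdgeGraph.subdiv]

lemma subdiv_V (G : HalfEdgeGraph) (b u n₁ n₂ : ℕ) :
    (G.subdiv b u n₁ n₂).V = insert u G.V := rfl

lemma subdiv_ι (G : HalfEdgeGraph) (b u n₁ n₂ h : ℕ) :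
    (G.subdiv b u n₁ n₂).ι h = if h = n₁ ∨ h = n₂ ∨ h ∈ G.H then
        (if h = b then n₁ else if h = n₁ then b else
         if h = n₂ then (if G.ι b = b then n₂ else G.ι b) else
         if h = G.ι b then n₂ else G.ι h) else h := by
  simp [HalfEdgeGraph.subdiv]

lemma subdiv_att (G : HalfEdgeGraph) (b u n₁ n₂ h : ℕ) :
    (G.subdiv b u n₁ n₂).att h = if h = n₁ ∨ h = n₂ ∨ h ∈ G.H then
      (if h = n₁ ∨ h = n₂ then some u else G.att h) else none := by
  simp [HalfEdgeGraph.subdiv]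

lemma delVertex_V (G : HalfEdgeGraph) (v : ℕ) : (G.delVertex v).V = G.V.erase v := rfl

lemma mem_delVertex_H (G : HalfEdgeGraph) (v h : ℕ) :
    h ∈ (G.delVertex v).H ↔ h ∈ G.H ∧
      ¬ ((G.att h = some v ∨ G.att (G.ι h) = some v) ∧
         (G.att h = some v ∨ G.att h = none) ∧
         (G.att (G.ι h) = some v ∨ G.att (G.ι h) = none)) := by
  simp [HalfEdgeGraph.delVertex]

lemma delVertex_ι (G : HalfEdgeGraph) (v h : ℕ) :
    (G.delVertex v).ι h = if h ∈ (G.delVertex v).H then G.ι h else h := by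
  rfl

lemma delVertex_att (G : HalfEdgeGraph) (v h : ℕ) :
    (G.delVertex v).att h = if h ∈ (G.delVertex v).H then
      (if G.att h = some v then none else G.att h) else none := by
  rfl

lemma snip_V (G : HalfEdgeGraph) (l a b : ℕ) : (G.snip l a b).V = G.V := rfl

lemma mem_snip_H (G : HalfEdgeGraph) (l a b h : ℕ) :
    h ∈ (G.snip l a b).H ↔ h = a ∨ h = b ∨ h ∈ G.H := by
  simp [HalfEdgeGraph.snip]

lemma snip_ι (G : HalfEdgeGraph) (l a b h : ℕ) :
    (G.snip l a b).ι h = if h = a ∨ h = b ∨ h ∈ G.H then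
        (if h = l then a else if h = a then l else
         if h = G.ι l then b else if h = b then G.ι l else G.ι h) else h := by
  simp [HalfEdgeGraph.snip]

lemma snip_att (G : HalfEdgeGraph) (l a b h : ℕ) :
    (G.snip l a b).att h = if h = a ∨ h = b ∨ h ∈ G.H then
      (if h = a ∨ h = b then none else G.att h) else none := by
  simp [HalfEdgeGraph.snip]

lemma mem_corolla₂ (G : HalfEdgeGraph) (v h : ℕ) :
    h ∈ (G.corolla v).2 ↔ h ∈ G.H ∧ (G.att h = some v ∨ G.att (G.ι h) = some v) := by
  simp [HalfEdgeGraph.corolla]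

end HalfEdgeGraph

end Aux


section Helpers
set_option linter.unusedSectionVars false
open Finset

variable {T : HalfEdgeGraph} {a u n₁ n₂ : ℕ}

/-- Context of basic facts used throughout. -/
structure Ctx (T : HalfEdgeGraph) (a u n₁ n₂ : ℕ) : Prop where
  hιH : ∀ h ∈ T.H, T.ι h ∈ T.H
  hιι : ∀ h ∈ T.H, T.ι (T.ι h) = h
  haH : a ∈ T.H
  hn1H : n₁ ∉ T.H
  hn2H : n₂ ∉ T.H
  hn12 : n₁ ≠ n₂
  hattu : ∀ h ∈ T.H, T.att h ≠ some u

namespace Ctx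

variable (C : Ctx T a u n₁ n₂)
include C

lemma hiaH : T.ι a ∈ T.H := C.hιH a C.haH
lemma haa : T.ι (T.ι a) = a := C.hιι a C.haH
lemma hn1a : n₁ ≠ a := fun h => C.hn1H (h ▸ C.haH)
lemma hn2a : n₂ ≠ a := fun h => C.hn2H (h ▸ C.haH)
lemma hn1ia : n₁ ≠ T.ι a := fun h => C.hn1H (h ▸ C.hiaH)
lemma hn2ia : n₂ ≠ T.ι a := fun h => C.hn2H (h ▸ C.hiaH)

/-- Computation of `S.ι` away from the special half-edges. -/
lemma Sι_of (h : ℕ) (hh : h ∈ T.H) (ha : h ≠ a) (hia : h ≠ T.ι a) :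
    (T.subdiv a u n₁ n₂).ι h = T.ι h := by
  rw [HalfEdgeGraph.subdiv_ι]
  have h1 : h ≠ n₁ := fun e => C.hn1H (e ▸ hh)
  have h2 : h ≠ n₂ := fun e => C.hn2H (e ▸ hh)
  simp [hh, ha, hia, h1, h2]

lemma Sιa : (T.subdiv a u n₁ n₂).ι a = n₁ := by
  rw [HalfEdgeGraph.subdiv_ι]; simp [C.haH]

lemma Sιn1 : (T.subdiv a u n₁ n₂).ι n₁ = a := by
  rw [HalfEdgeGraph.subdiv_ι]; simp [Ne.symm C.hn12, C.hn1a]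

lemma Sιn2 : (T.subdiv a u n₁ n₂).ι n₂ = if T.ι a = a then n₂ else T.ι a := by
  rw [HalfEdgeGraph.subdiv_ι]; simp [Ne.symm C.hn12, C.hn2a]

lemma Sιia (hne : T.ι a ≠ a) : (T.subdiv a u n₁ n₂).ι (T.ι a) = n₂ := by
  rw [HalfEdgeGraph.subdiv_ι]; simp [C.hiaH, hne, Ne.symm (C.hn1ia), Ne.symm (C.hn2ia)]

lemma Satt_of (h : ℕ) (hh : h ∈ T.H) : (T.subdiv a u n₁ n₂).att h = T.att h := by
  rw [HalfEdgeGraph.subdiv_att]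
  have h1 : h ≠ n₁ := fun e => C.hn1H (e ▸ hh)
  have h2 : h ≠ n₂ := fun e => C.hn2H (e ▸ hh)
  simp [hh, h1, h2]

lemma Sattn1 : (T.subdiv a u n₁ n₂).att n₁ = some u := by
  rw [HalfEdgeGraph.subdiv_att]; simp

lemma Sattn2 : (T.subdiv a u n₁ n₂).att n₂ = some u := by
  rw [HalfEdgeGraph.subdiv_att]; simp

lemma σe_of (h : ℕ) (h1 : h ≠ n₁) (h2 : h ≠ n₂) :
    (T.codegeneracy a u n₁ n₂).e h = h := by
  simp [HalfEdgeGraph.codegeneracy, h1, h2]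

lemma σen1 : (T.codegeneracy a u n₁ n₂).e n₁ = T.ι a := by
  simp [HalfEdgeGraph.codegeneracy]

lemma σen2 : (T.codegeneracy a u n₁ n₂).e n₂ = a := by
  simp [HalfEdgeGraph.codegeneracy, Ne.symm C.hn12]

/-- The key image computation: the codegeneracy map sends the part of `T_a`
selected by an attachment predicate `p` (not satisfied at `u`) onto the part of
`T` selected by `p`. -/
lemma image_filter (p : Option ℕ → Prop) [DecidablePred p] (hpu : ¬ p (some u)) :
    Finset.image (T.codegeneracy a u n₁ n₂).e
      ((T.subdiv a u n₁ n₂).H.filter fun h =>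
        p ((T.subdiv a u n₁ n₂).att h) ∨
        p ((T.subdiv a u n₁ n₂).att ((T.subdiv a u n₁ n₂).ι h))) =
      T.H.filter fun h => p (T.att h) ∨ p (T.att (T.ι h)) := by
  ext k
  simp only [Finset.mem_image, Finset.mem_filter, HalfEdgeGraph.mem_subdiv_H]
  constructor
  · rintro ⟨g, ⟨hg1, hg2⟩, rfl⟩
    rcases hg1 with rfl | rfl | hgH
    · -- g = n₁
      rw [C.Sattn1, C.Sιn1, C.Satt_of a C.haH] at hg2
      rw [C.σen1]
      exact ⟨C.hiaH, Or.inr (by rw [C.haa]; exact hg2.resolve_left hpu)⟩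
    · -- g = n₂
      rw [C.Sattn2, C.Sιn2] at hg2
      rw [C.σen2]
      by_cases hia : T.ι a = a
      · rw [if_pos hia, C.Sattn2] at hg2
        exact absurd (hg2.resolve_left hpu) hpu
      · rw [if_neg hia, C.Satt_of _ C.hiaH] at hg2
        exact ⟨C.haH, Or.inr (hg2.resolve_left hpu)⟩
    · -- g ∈ T.H
      have h1 : g ≠ n₁ := fun e => C.hn1H (e ▸ hgH)
      have h2 : g ≠ n₂ := fun e => C.hn2H (e ▸ hgH)
      rw [C.σe_of g h1 h2]
      rw [C.Satt_of g hgH] at hg2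
      by_cases hga : g = a
      · subst hga
        rw [C.Sιa, C.Sattn1] at hg2
        exact ⟨hgH, Or.inl (hg2.resolve_right hpu)⟩
      · by_cases hgia : g = T.ι a
        · subst hgia
          by_cases hia : T.ι a = a
          · exact absurd hia hga
          · rw [C.Sιia hia, C.Sattn2] at hg2
            exact ⟨hgH, Or.inl (hg2.resolve_right hpu)⟩
        · rw [C.Sι_of g hgH hga hgia, C.Satt_of _ (C.hιH g hgH)] at hg2
          exact ⟨hgH, hg2⟩
  · rintro ⟨hkH, hk⟩
    by_cases hka : k = a
    · subst hka
      rcases hk with hk | hk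
      · exact ⟨k, ⟨Or.inr (Or.inr hkH),
          Or.inl (by rwa [C.Satt_of k C.haH])⟩, C.σe_of k (Ne.symm C.hn1a) (Ne.symm C.hn2a)⟩
      · by_cases hia : T.ι k = k
        · exact ⟨k, ⟨Or.inr (Or.inr hkH),
            Or.inl (by rw [C.Satt_of k C.haH]; rwa [hia] at hk)⟩,
            C.σe_of k (Ne.symm C.hn1a) (Ne.symm C.hn2a)⟩
        · exact ⟨n₂, ⟨Or.inr (Or.inl rfl),
            Or.inr (by rw [C.Sιn2, if_neg hia, C.Satt_of _ C.hiaH]; exact hk)⟩, C.σen2⟩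
    · by_cases hkia : k = T.ι a
      · subst hkia
        rcases hk with hk | hk
        · exact ⟨T.ι a, ⟨Or.inr (Or.inr C.hiaH),
            Or.inl (by rwa [C.Satt_of _ C.hiaH])⟩,
            C.σe_of _ (Ne.symm C.hn1ia) (Ne.symm C.hn2ia)⟩
        · rw [C.haa] at hk
          exact ⟨n₁, ⟨Or.inl rfl,
            Or.inr (by rw [C.Sιn1, C.Satt_of a C.haH]; exact hk)⟩, C.σen1⟩
      · refine ⟨k, ⟨Or.inr (Or.inr hkH), ?_⟩,
          C.σe_of k (fun e => C.hn1H (e ▸ hkH)) (fun e => C.hn2H (e ▸ hkH))⟩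
        have hιk : T.ι k ∉ ({a, T.ι a} : Finset ℕ) := by
          simp only [Finset.mem_insert, Finset.mem_singleton]
          push_neg
          constructor
          · intro e; exact hkia (by rw [← e]; exact (C.hιι k hkH).symm)
          · intro e
            exact hka (by have := congrArg T.ι e; rwa [C.hιι k hkH, C.haa] at this)
        simp only [Finset.mem_insert, Finset.mem_singleton] at hιk
        push_neg at hιk
        rw [C.Sι_of k hkH hka hkia, C.Satt_of _ (C.hιH k hkH), C.Satt_of k hkH]
        exact hk

/-- The corolla of the new vertex `u` in `T_a`. -/
lemma corolla_u : ((T.subdiv a u n₁ n₂).corolla u).2 = insert n₁ (insert n₂ ({a, T.ι a} : Finset ℕ)) := by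
  ext h
  simp only [HalfEdgeGraph.mem_corolla₂, HalfEdgeGraph.mem_subdiv_H, Finset.mem_insert, Finset.mem_singleton]
  constructor
  · rintro ⟨h1 | h2 | hH, hc⟩
    · exact Or.inl h1
    · exact Or.inr (Or.inl h2)
    · right; right
      have h1 : h ≠ n₁ := fun e => C.hn1H (e ▸ hH)
      have h2 : h ≠ n₂ := fun e => C.hn2H (e ▸ hH)
      rw [C.Satt_of h hH] at hc
      rcases hc with hc | hc
      · exact absurd hc (C.hattu h hH)
      · by_cases hha : h = a
        · exact Or.inl hha
        · by_cases hhia : h = T.ι a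
          · exact Or.inr hhia
          · rw [C.Sι_of h hH hha hhia, C.Satt_of _ (C.hιH h hH)] at hc
            exact absurd hc (C.hattu _ (C.hιH h hH))
  · rintro (rfl | rfl | rfl | rfl)
    · exact ⟨Or.inl rfl, Or.inl (by rw [C.Sattn1])⟩
    · exact ⟨Or.inr (Or.inl rfl), Or.inl (by rw [C.Sattn2])⟩
    · exact ⟨Or.inr (Or.inr C.haH), Or.inr (by rw [C.Sιa, C.Sattn1])⟩
    · refine ⟨Or.inr (Or.inr C.hiaH), Or.inr ?_⟩
      by_cases hia : T.ι a = a
      · rw [hia, C.Sιa, C.Sattn1]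
      · rw [C.Sιia hia, C.Sattn2]


lemma image_corolla (v : ℕ) (hvu : v ≠ u) :
    Finset.image (T.codegeneracy a u n₁ n₂).e ((T.subdiv a u n₁ n₂).corolla v).2 =
      (T.corolla v).2 := by
  have := C.image_filter (p := fun o => o = some v) (by simp [Ne.symm hvu])
  simpa [HalfEdgeGraph.corolla] using this

lemma image_barbell (x y : ℕ) (hx : u ≠ x) (hy : u ≠ y) :
    Finset.image (T.codegeneracy a u n₁ n₂).e
      ((T.subdiv a u n₁ n₂).H.filter fun h =>
        (T.subdiv a u n₁ n₂).att h = some x ∨ (T.subdiv a u n₁ n₂).att h = some y ∨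
        (T.subdiv a u n₁ n₂).att ((T.subdiv a u n₁ n₂).ι h) = some x ∨
        (T.subdiv a u n₁ n₂).att ((T.subdiv a u n₁ n₂).ι h) = some y) =
      T.H.filter fun h =>
        T.att h = some x ∨ T.att h = some y ∨
        T.att (T.ι h) = some x ∨ T.att (T.ι h) = some y := by
  have := C.image_filter (p := fun o => o = some x ∨ o = some y)
    (by simp [hx, hy])
  simpa [or_assoc] using this

lemma σv_u : (T.codegeneracy a u n₁ n₂).vimg u = (∅, ({a, T.ι a} : Finset ℕ)) := by
  simp [HalfEdgeGraph.codegeneracy]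

lemma σv_of (v : ℕ) (hv : v ≠ u) :
    (T.codegeneracy a u n₁ n₂).vimg v = T.corolla v := by
  simp [HalfEdgeGraph.codegeneracy, hv]

lemma comp_vimg_corolla (f : PreGMap) (v : ℕ) (hvu : v ≠ u)
    (hf : f.vimg v = (T.subdiv a u n₁ n₂).corolla v) :
    ((T.codegeneracy a u n₁ n₂).comp f).vimg v = T.corolla v := by
  simp only [PreGMap.comp, hf]
  rw [show ((T.subdiv a u n₁ n₂).corolla v).1 = {v} from rfl]
  rw [Finset.singleton_biUnion, Finset.singleton_biUnion, C.σv_of v hvu,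
    C.image_corolla v hvu, Finset.union_self]

lemma comp_vimg_u (f : PreGMap) (hf : f.vimg u = (T.subdiv a u n₁ n₂).corolla u) :
    ((T.codegeneracy a u n₁ n₂).comp f).vimg u = (∅, ({a, T.ι a} : Finset ℕ)) := by
  simp only [PreGMap.comp, hf]
  rw [show ((T.subdiv a u n₁ n₂).corolla u).1 = {u} from rfl]
  rw [Finset.singleton_biUnion, Finset.singleton_biUnion, C.σv_u, C.corolla_u]
  refine Prod.ext rfl ?_
  simp only [Finset.image_insert, Finset.image_singleton, C.σen1, C.σen2,
    C.σe_of a (Ne.symm C.hn1a) (Ne.symm C.hn2a),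
    C.σe_of (T.ι a) (Ne.symm C.hn1ia) (Ne.symm C.hn2ia)]
  ext h
  simp only [Finset.mem_union, Finset.mem_insert, Finset.mem_singleton]
  tauto

end Ctx

end Helpers


section Prim
open Finset
variable {a u n₁ n₂ : ℕ}

lemma σe_of' (G : HalfEdgeGraph) (h : ℕ) (h1 : h ≠ n₁) (h2 : h ≠ n₂) :
    (G.codegeneracy a u n₁ n₂).e h = h := by simp [HalfEdgeGraph.codegeneracy, h1, h2]

lemma σen1' (G : HalfEdgeGraph) : (G.codegeneracy a u n₁ n₂).e n₁ = G.ι a := by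
  simp [HalfEdgeGraph.codegeneracy]

lemma σen2' (G : HalfEdgeGraph) (hn12 : n₁ ≠ n₂) : (G.codegeneracy a u n₁ n₂).e n₂ = a := by
  simp [HalfEdgeGraph.codegeneracy, Ne.symm hn12]

lemma σv_u' (G : HalfEdgeGraph) :
    (G.codegeneracy a u n₁ n₂).vimg u = (∅, ({a, G.ι a} : Finset ℕ)) := by
  simp [HalfEdgeGraph.codegeneracy]

lemma σv_of' (G : HalfEdgeGraph) (v : ℕ) (hv : v ≠ u) :
    (G.codegeneracy a u n₁ n₂).vimg v = G.corolla v := by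
  simp [HalfEdgeGraph.codegeneracy, hv]

lemma comp_vimg_u_right (G : HalfEdgeGraph) (g : PreGMap) (hga : g.e a = a)
    (hgia : g.e (G.ι a) = G.ι a) :
    (g.comp (G.codegeneracy a u n₁ n₂)).vimg u = (∅, ({a, G.ι a} : Finset ℕ)) := by
  simp [PreGMap.comp, σv_u', Finset.image_insert, Finset.image_singleton, hga, hgia]

lemma comp_vimg_v_right (G : HalfEdgeGraph) (g : PreGMap) (v : ℕ) (hv : v ≠ u) :
    (g.comp (G.codegeneracy a u n₁ n₂)).vimg v =
      ((g.vimg v).1, (G.corolla v).2.image g.e ∪ (g.vimg v).2) := by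
  rw [show (g.comp (G.codegeneracy a u n₁ n₂)).vimg v =
    (((G.codegeneracy a u n₁ n₂).vimg v).1.biUnion fun w => (g.vimg w).1,
     ((G.codegeneracy a u n₁ n₂).vimg v).2.image g.e ∪
       ((G.codegeneracy a u n₁ n₂).vimg v).1.biUnion fun w => (g.vimg w).2) from rfl,
    σv_of' G v hv, show (G.corolla v).1 = {v} from rfl,
    Finset.singleton_biUnion, Finset.singleton_biUnion]

end Prim

set_option maxHeartbeats 4000000 in
/-- Let `σ^a : T_a → T` be a codegeneracy map and let
`δ^e : T' → T` be a coface map (of any kind `k`) that does not eliminate the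
edge `a`.  Then there is an induced coface map `δ^e : T'_a → T_a` (so that
`(T_a)' = (T')_a`), and the square commutes: `σ^a ∘ δ^e = δ^e ∘ σ^a` as
graphical maps `T'_a → T`. -/
theorem coface_codegeneracy_commute (T : HalfEdgeGraph) (hT : T.Wf) (a u n₁ n₂ : ℕ)
    (hdeg : T.IsDegen a u n₁ n₂) (k : CofaceKind) (hk : T.IsCoface k)
    (hk' : (T.subdiv a u n₁ n₂).IsCoface k)
    (hnoelim : a ∈ (T.cofaceSource k).H) :
    (T.subdiv a u n₁ n₂).cofaceSource k = (T.cofaceSource k).subdiv a u n₁ n₂ ∧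
    PreGMap.EqOn ((T.subdiv a u n₁ n₂).cofaceSource k)
      ((T.codegeneracy a u n₁ n₂).comp ((T.subdiv a u n₁ n₂).cofaceMap k))
      ((T.cofaceMap k).comp ((T.cofaceSource k).codegeneracy a u n₁ n₂)) := by
  obtain ⟨hιH, hιι, hattV, -⟩ := hT
  obtain ⟨haH, huV, hn1H, hn2H, hn12⟩ := hdeg
  have C : Ctx T a u n₁ n₂ :=
    ⟨hιH, hιι, haH, hn1H, hn2H, hn12, fun h hh e => huV (hattV h hh u e)⟩
  have hiaH : T.ι a ∈ T.H := C.hiaH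
  have haa : T.ι (T.ι a) = a := C.haa
  have hn1a : n₁ ≠ a := C.hn1a
  have hn2a : n₂ ≠ a := C.hn2a
  have hn1ia : n₁ ≠ T.ι a := C.hn1ia
  have hn2ia : n₂ ≠ T.ι a := C.hn2ia
  cases k with
  | inner e =>
    obtain ⟨⟨heH, heι, hse, hsιe⟩, hnl⟩ := hk
    obtain ⟨x, hx⟩ := Option.isSome_iff_exists.mp hse
    obtain ⟨y, hy⟩ := Option.isSome_iff_exists.mp hsιe
    have hιeH : T.ι e ∈ T.H := hιH e heH
    have hee : T.ι (T.ι e) = e := hιι e heH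
    have hxy : x ≠ y := fun hxy => hnl ⟨heH, heι, x, hx, by rw [hy, hxy]⟩
    simp only [HalfEdgeGraph.cofaceSource, HalfEdgeGraph.cofaceMap] at hnoelim ⊢
    rw [HalfEdgeGraph.mem_contract_H] at hnoelim
    obtain ⟨-, hae, haιe⟩ := hnoelim
    have hea : e ≠ a := Ne.symm hae
    have heιa : e ≠ T.ι a := fun h => haιe (by rw [h, haa])
    have hιea : T.ι e ≠ a := Ne.symm haιe
    have hιeιa : T.ι e ≠ T.ι a := fun h => hae (by rw [← haa, ← h, hee])
    have hιae : T.ι a ≠ e := Ne.symm heιa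
    have hιaιe : T.ι a ≠ T.ι e := Ne.symm hιeιa
    have he1 : e ≠ n₁ := fun h => hn1H (h ▸ heH)
    have he2 : e ≠ n₂ := fun h => hn2H (h ▸ heH)
    have hιe1 : T.ι e ≠ n₁ := fun h => hn1H (h ▸ hιeH)
    have hιe2 : T.ι e ≠ n₂ := fun h => hn2H (h ▸ hιeH)
    have hSatt_e : (T.subdiv a u n₁ n₂).att e = T.att e := C.Satt_of e heH
    have hSatt_ιe : (T.subdiv a u n₁ n₂).att (T.ι e) = T.att (T.ι e) := C.Satt_of _ hιeH
    have hSι_e : (T.subdiv a u n₁ n₂).ι e = T.ι e := C.Sι_of e heH hea heιa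
    have hSι_ιe : (T.subdiv a u n₁ n₂).ι (T.ι e) = e := by
      rw [C.Sι_of _ hιeH hιea hιeιa, hee]
    have hxV : x ∈ T.V := hattV e heH x hx
    have hyV : y ∈ T.V := hattV _ hιeH y hy
    have hux : u ≠ x := fun h => huV (h ▸ hxV)
    have huy : u ≠ y := fun h => huV (h ▸ hyV)
    have hCιa : (T.contract e).ι a = T.ι a := by
      rw [HalfEdgeGraph.contract_ι]; simp [haH, hae, haιe]
    have hGeq : (T.subdiv a u n₁ n₂).contract e = (T.contract e).subdiv a u n₁ n₂ := by
      refine HalfEdgeGraph.ext' ?_ ?_ ?_ ?_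
      · rw [HalfEdgeGraph.contract_V, HalfEdgeGraph.subdiv_V, HalfEdgeGraph.subdiv_V, HalfEdgeGraph.contract_V,
            hSatt_e, hSι_e, hSatt_ιe, hx, hy]
        simp only [Option.getD_some]
        ext v
        by_cases h1 : v = u <;> by_cases h2 : v = x <;> by_cases h3 : v = y <;>
          simp_all [Finset.mem_insert, Finset.mem_erase]
      · ext h
        rw [HalfEdgeGraph.mem_contract_H, HalfEdgeGraph.mem_subdiv_H, HalfEdgeGraph.mem_subdiv_H,
            HalfEdgeGraph.mem_contract_H, hSι_e]
        by_cases h1 : h = n₁ <;> by_cases h2 : h = n₂ <;>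
          simp_all [Ne.symm he1, Ne.symm he2, Ne.symm hιe1, Ne.symm hιe2]
      · intro h
        simp only [HalfEdgeGraph.contract_ι, HalfEdgeGraph.subdiv_ι, HalfEdgeGraph.mem_contract_H,
          HalfEdgeGraph.mem_subdiv_H, heH, hιeH, haH, hiaH, he1, he2, hea, heιa,
          hιe1, hιe2, hιea, hιeιa, hae, haιe, hιae, hιaιe, hn1a, hn2a, hn1ia, hn2ia,
          hn12, Ne.symm hn12, Ne.symm hn1a, Ne.symm hn2a, Ne.symm hn1ia, Ne.symm hn2ia,
          Ne.symm he1, Ne.symm he2, Ne.symm hιe1, Ne.symm hιe2, ne_eq,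
          not_false_eq_true, if_true, if_false, or_true, true_or, or_false, false_or,
          and_true, true_and, and_false, false_and, not_true, not_false_iff]
        split_ifs <;> first | rfl | omega | simp_all
      · intro h
        simp only [HalfEdgeGraph.contract_att, HalfEdgeGraph.subdiv_att, HalfEdgeGraph.contract_ι, HalfEdgeGraph.subdiv_ι,
          HalfEdgeGraph.mem_contract_H, HalfEdgeGraph.mem_subdiv_H, heH, hιeH, haH, hiaH, he1, he2, hea, heιa,
          hιe1, hιe2, hιea, hιeιa, hae, haιe, hιae, hιaιe, hn1a, hn2a, hn1ia, hn2ia,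
          hn12, Ne.symm hn12, Ne.symm hn1a, Ne.symm hn2a, Ne.symm hn1ia, Ne.symm hn2ia,
          Ne.symm he1, Ne.symm he2, Ne.symm hιe1, Ne.symm hιe2, hx, hy, Option.getD_some,
          ne_eq, not_false_eq_true, if_true, if_false, or_true, true_or, or_false, false_or,
          and_true, true_and, and_false, false_and, not_true, not_false_iff]
        split_ifs <;> first | rfl | omega | simp_all
    have hδTe : (T.innerCoface e).e = id := rfl
    have hδSe : ((T.subdiv a u n₁ n₂).innerCoface e).e = id := rfl
    have hminV : min x y ∈ T.V := by rcases min_choice x y with h | h <;> rw [h] <;> assumption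
    have humin : u ≠ min x y := fun h => huV (h ▸ hminV)
    have hδS : ∀ w, ((T.subdiv a u n₁ n₂).innerCoface e).vimg w =
        if w = min x y then (({x, y} : Finset ℕ),
          (T.subdiv a u n₁ n₂).H.filter fun h =>
            (T.subdiv a u n₁ n₂).att h = some x ∨ (T.subdiv a u n₁ n₂).att h = some y ∨
            (T.subdiv a u n₁ n₂).att ((T.subdiv a u n₁ n₂).ι h) = some x ∨
            (T.subdiv a u n₁ n₂).att ((T.subdiv a u n₁ n₂).ι h) = some y)
        else (T.subdiv a u n₁ n₂).corolla w := by
      intro w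
      simp only [HalfEdgeGraph.innerCoface, hSatt_e, hSatt_ιe, hSι_e, hx, hy, Option.getD_some]
    have hδT : ∀ w, (T.innerCoface e).vimg w =
        if w = min x y then (({x, y} : Finset ℕ),
          T.H.filter fun h =>
            T.att h = some x ∨ T.att h = some y ∨
            T.att (T.ι h) = some x ∨ T.att (T.ι h) = some y)
        else T.corolla w := by
      intro w
      simp only [HalfEdgeGraph.innerCoface, hx, hy, Option.getD_some]
    have hBx : (T.corolla x).2 ⊆ T.H.filter fun h =>
        T.att h = some x ∨ T.att h = some y ∨
        T.att (T.ι h) = some x ∨ T.att (T.ι h) = some y := by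
      intro h hh
      rw [HalfEdgeGraph.mem_corolla₂] at hh
      rw [Finset.mem_filter]
      exact ⟨hh.1, by tauto⟩
    have hBy : (T.corolla y).2 ⊆ T.H.filter fun h =>
        T.att h = some x ∨ T.att h = some y ∨
        T.att (T.ι h) = some x ∨ T.att (T.ι h) = some y := by
      intro h hh
      rw [HalfEdgeGraph.mem_corolla₂] at hh
      rw [Finset.mem_filter]
      exact ⟨hh.1, by tauto⟩
    have hDatt : ∀ h ∈ (T.contract e).H, (T.contract e).att h =
        if T.att h = some x ∨ T.att h = some y then some (min x y) else T.att h := by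
      intro h hh
      rw [HalfEdgeGraph.mem_contract_H] at hh
      rw [HalfEdgeGraph.contract_att, if_pos hh, hx, hy]
      simp only [Option.getD_some]
    have hDι : ∀ h ∈ (T.contract e).H, (T.contract e).ι h = T.ι h := by
      intro h hh
      rw [HalfEdgeGraph.mem_contract_H] at hh
      rw [HalfEdgeGraph.contract_ι, if_pos hh]
    have hDιH : ∀ h ∈ (T.contract e).H, (T.contract e).ι h ∈ (T.contract e).H := by
      intro h hh
      rw [hDι h hh]
      rw [HalfEdgeGraph.mem_contract_H] at hh ⊢
      refine ⟨hιH h hh.1, fun hc => hh.2.2 ?_, fun hc => hh.2.1 ?_⟩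
      · rw [← hιι h hh.1, hc]
      · rw [← hιι h hh.1, hc, hee]
    refine ⟨hGeq, ?_, ?_⟩
    · intro h _
      simp [PreGMap.comp, HalfEdgeGraph.innerCoface, HalfEdgeGraph.codegeneracy, HalfEdgeGraph.contract_ι,
        haH, hae, haιe]
    · intro v hv
      rw [hGeq, HalfEdgeGraph.subdiv_V, HalfEdgeGraph.contract_V, hx, hy] at hv
      simp only [Option.getD_some, Finset.mem_insert, Finset.mem_erase] at hv
      rcases hv with rfl | hv | hv
      · -- v = u
        rw [C.comp_vimg_u _ (by rw [hδS, if_neg humin]),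
            comp_vimg_u_right _ _ rfl (by rw [hCιa]; rfl), hCιa]
      · -- v = min x y
        subst hv
        rw [comp_vimg_v_right _ _ _ (Ne.symm humin)]
        show (_, _) = _
        rw [hδS, if_pos rfl]
        rw [hδT, if_pos rfl]
        refine Prod.ext ?_ ?_
        · show Finset.biUnion {x, y} _ = _
          rw [show ({x, y} : Finset ℕ) = insert x {y} from rfl, Finset.biUnion_insert,
            Finset.singleton_biUnion, C.σv_of x (Ne.symm hux), C.σv_of y (Ne.symm huy)]
          rw [show (T.corolla x).1 = {x} from rfl, show (T.corolla y).1 = {y} from rfl]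
          ext w; simp
        · show Finset.image _ _ ∪ Finset.biUnion {x, y} _ = _
          rw [C.image_barbell x y hux huy]
          rw [show ({x, y} : Finset ℕ) = insert x {y} from rfl, Finset.biUnion_insert,
            Finset.singleton_biUnion, C.σv_of x (Ne.symm hux), C.σv_of y (Ne.symm huy)]
          rw [hδTe, Finset.image_id]
          have h3 : ((T.contract e).corolla (min x y)).2 ⊆ T.H.filter fun h =>
              T.att h = some x ∨ T.att h = some y ∨
              T.att (T.ι h) = some x ∨ T.att (T.ι h) = some y := by
            intro h hh
            rw [HalfEdgeGraph.mem_corolla₂] at hh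
            obtain ⟨hhH, hc⟩ := hh
            rw [hDatt h hhH, hDatt _ (hDιH h hhH), hDι h hhH] at hc
            rw [HalfEdgeGraph.mem_contract_H] at hhH
            rw [Finset.mem_filter]
            refine ⟨hhH.1, ?_⟩
            rcases min_choice x y with hz | hz <;> rw [hz] at hc <;>
              · rcases hc with hc | hc <;> split_ifs at hc <;> simp_all <;> tauto
          rw [Finset.union_eq_left.mpr (Finset.union_subset hBx hBy),
              Finset.union_eq_right.mpr h3]
      · -- generic v
        obtain ⟨hvy, hvx, hvV⟩ := hv
        have hvu : v ≠ u := fun h => huV (h ▸ hvV)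
        have hvm : v ≠ min x y := by rcases min_choice x y with h | h <;> rw [h] <;> assumption
        rw [C.comp_vimg_corolla _ v hvu (by rw [hδS, if_neg hvm]),
            comp_vimg_v_right _ _ v hvu, hδT, if_neg hvm]
        refine Prod.ext rfl ?_
        rw [hδTe, Finset.image_id]
        have hsub : ((T.contract e).corolla v).2 ⊆ (T.corolla v).2 := by
          intro h hh
          rw [HalfEdgeGraph.mem_corolla₂] at hh ⊢
          obtain ⟨hhH, hc⟩ := hh
          rw [hDatt h hhH, hDatt _ (hDιH h hhH), hDι h hhH] at hc
          rw [HalfEdgeGraph.mem_contract_H] at hhH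
          refine ⟨hhH.1, ?_⟩
          rcases hc with hc | hc <;> split_ifs at hc <;> simp_all
        exact (Finset.union_eq_right.mpr hsub).symm
  | outer w =>
    obtain ⟨hwV, -⟩ := hk
    have huw : u ≠ w := fun h => huV (h ▸ hwV)
    simp only [HalfEdgeGraph.cofaceSource, HalfEdgeGraph.cofaceMap] at hnoelim ⊢
    have hDιH : ∀ h ∈ (T.delVertex w).H, T.ι h ∈ (T.delVertex w).H := by
      intro h hh
      rw [HalfEdgeGraph.mem_delVertex_H] at hh ⊢
      obtain ⟨hH, hns⟩ := hh
      refine ⟨hιH h hH, ?_⟩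
      rw [hιι h hH]
      tauto
    have hιaS : T.ι a ∈ (T.delVertex w).H := hDιH a hnoelim
    have hDιa : (T.delVertex w).ι a = T.ι a := by rw [HalfEdgeGraph.delVertex_ι, if_pos hnoelim]
    have hsurvS : ∀ h' ∈ (T.subdiv a u n₁ n₂).H,
        ((T.subdiv a u n₁ n₂).att h' = some u ∨
         (T.subdiv a u n₁ n₂).att ((T.subdiv a u n₁ n₂).ι h') = some u) →
        h' ∈ ((T.subdiv a u n₁ n₂).delVertex w).H := by
      intro h' hmem hor
      rw [HalfEdgeGraph.mem_delVertex_H]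
      refine ⟨hmem, fun hc => ?_⟩
      rcases hor with ho | ho
      · rcases hc.2.1 with h'' | h'' <;> rw [ho] at h'' <;> simp [huw] at h''
      · rcases hc.2.2 with h'' | h'' <;> rw [ho] at h'' <;> simp [huw] at h''
    have hHeq : ((T.subdiv a u n₁ n₂).delVertex w).H
        = ((T.delVertex w).subdiv a u n₁ n₂).H := by
      ext h
      rw [HalfEdgeGraph.mem_subdiv_H]
      by_cases h1 : h = n₁
      · subst h1
        exact iff_of_true
          (hsurvS h (by rw [HalfEdgeGraph.mem_subdiv_H]; tauto) (Or.inl C.Sattn1)) (Or.inl rfl)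
      by_cases h2 : h = n₂
      · subst h2
        exact iff_of_true
          (hsurvS h (by rw [HalfEdgeGraph.mem_subdiv_H]; tauto) (Or.inl C.Sattn2))
          (Or.inr (Or.inl rfl))
      by_cases h3 : h = a
      · subst h3
        exact iff_of_true
          (hsurvS h (by rw [HalfEdgeGraph.mem_subdiv_H]; tauto)
            (Or.inr (by rw [C.Sιa, C.Sattn1])))
          (Or.inr (Or.inr hnoelim))
      by_cases h4 : h = T.ι a
      · subst h4
        refine iff_of_true
          (hsurvS _ (by rw [HalfEdgeGraph.mem_subdiv_H]; right; right; exact hiaH)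
            (Or.inr ?_))
          (Or.inr (Or.inr hιaS))
        rw [C.Sιia h3, C.Sattn2]
      by_cases h5 : h ∈ T.H
      · rw [HalfEdgeGraph.mem_delVertex_H, HalfEdgeGraph.mem_delVertex_H, HalfEdgeGraph.mem_subdiv_H,
          C.Sι_of h h5 h3 h4, C.Satt_of h h5, C.Satt_of _ (hιH h h5)]
        simp [h1, h2, h5]
      · rw [HalfEdgeGraph.mem_delVertex_H, HalfEdgeGraph.mem_delVertex_H, HalfEdgeGraph.mem_subdiv_H]
        simp [h1, h2, h5]
    have hGeq : (T.subdiv a u n₁ n₂).delVertex w = (T.delVertex w).subdiv a u n₁ n₂ := by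
      refine HalfEdgeGraph.ext' ?_ hHeq ?_ ?_
      · rw [HalfEdgeGraph.delVertex_V, HalfEdgeGraph.subdiv_V, HalfEdgeGraph.subdiv_V, HalfEdgeGraph.delVertex_V]
        ext v
        by_cases h1 : v = u <;> by_cases h2 : v = w <;>
          simp_all [Finset.mem_insert, Finset.mem_erase]
      · intro h
        rw [HalfEdgeGraph.delVertex_ι, hHeq, HalfEdgeGraph.subdiv_ι (T.delVertex w) a u n₁ n₂ h]
        by_cases hP : h = n₁ ∨ h = n₂ ∨ h ∈ (T.delVertex w).H
        · rw [if_pos ((HalfEdgeGraph.mem_subdiv_H _ _ _ _ _ _).mpr hP), if_pos hP]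
          rcases hP with h1 | h2 | hD
          · subst h1
            rw [C.Sιn1, if_neg hn1a, if_pos rfl]
          · subst h2
            rw [C.Sιn2, if_neg hn2a, if_neg (Ne.symm hn12), if_pos rfl, hDιa]
          · have hh5 : h ∈ T.H := ((HalfEdgeGraph.mem_delVertex_H T w h).mp hD).1
            by_cases h3 : h = a
            · subst h3
              rw [C.Sιa, if_pos rfl]
            by_cases h4 : h = T.ι a
            · subst h4
              rw [C.Sιia h3, if_neg h3, if_neg (Ne.symm hn1ia), if_neg (Ne.symm hn2ia),
                hDιa, if_pos rfl]
            · have hhn1 : h ≠ n₁ := fun e => hn1H (e ▸ hh5)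
              have hhn2 : h ≠ n₂ := fun e => hn2H (e ▸ hh5)
              rw [C.Sι_of h hh5 h3 h4, if_neg h3, if_neg hhn1, if_neg hhn2,
                if_neg (show ¬(h = (T.delVertex w).ι a) by rw [hDιa]; exact h4),
                HalfEdgeGraph.delVertex_ι, if_pos hD]
        · rw [if_neg (fun hc => hP ((HalfEdgeGraph.mem_subdiv_H _ _ _ _ _ _).mp hc)), if_neg hP]
      · intro h
        rw [HalfEdgeGraph.delVertex_att, hHeq, HalfEdgeGraph.subdiv_att (T.delVertex w) a u n₁ n₂ h]
        by_cases hP : h = n₁ ∨ h = n₂ ∨ h ∈ (T.delVertex w).H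
        · rw [if_pos ((HalfEdgeGraph.mem_subdiv_H _ _ _ _ _ _).mpr hP), if_pos hP]
          rcases hP with h1 | h2 | hD
          · subst h1
            rw [C.Sattn1, if_neg (by simp [huw]), if_pos (Or.inl rfl)]
          · subst h2
            rw [C.Sattn2, if_neg (by simp [huw]), if_pos (Or.inr rfl)]
          · have hh5 : h ∈ T.H := ((HalfEdgeGraph.mem_delVertex_H T w h).mp hD).1
            have hhn1 : h ≠ n₁ := fun e => hn1H (e ▸ hh5)
            have hhn2 : h ≠ n₂ := fun e => hn2H (e ▸ hh5)
            rw [C.Satt_of h hh5,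
              if_neg (show ¬(h = n₁ ∨ h = n₂) by rintro (e | e); exacts [hhn1 e, hhn2 e]),
              HalfEdgeGraph.delVertex_att, if_pos hD]
        · rw [if_neg (fun hc => hP ((HalfEdgeGraph.mem_subdiv_H _ _ _ _ _ _).mp hc)), if_neg hP]
    refine ⟨hGeq, ?_, ?_⟩
    · intro h _
      simp [PreGMap.comp, HalfEdgeGraph.outerCoface, HalfEdgeGraph.codegeneracy, hDιa]
    · intro v hv
      rw [hGeq, HalfEdgeGraph.subdiv_V, HalfEdgeGraph.delVertex_V] at hv
      simp only [Finset.mem_insert, Finset.mem_erase] at hv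
      rcases hv with rfl | hv
      · rw [C.comp_vimg_u _ rfl, comp_vimg_u_right _ _ rfl rfl, hDιa]
      · obtain ⟨hvw, hvV⟩ := hv
        have hvu : v ≠ u := fun h => huV (h ▸ hvV)
        rw [C.comp_vimg_corolla _ v hvu rfl, comp_vimg_v_right _ _ v hvu]
        refine Prod.ext rfl ?_
        rw [show (T.outerCoface w).e = id from rfl, Finset.image_id]
        have hsub : ((T.delVertex w).corolla v).2 ⊆ (T.corolla v).2 := by
          intro h hh
          rw [HalfEdgeGraph.mem_corolla₂] at hh ⊢
          obtain ⟨hhH, hc⟩ := hh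
          have hhH' := (HalfEdgeGraph.mem_delVertex_H T w h).mp hhH
          rw [HalfEdgeGraph.delVertex_ι, if_pos hhH, HalfEdgeGraph.delVertex_att, HalfEdgeGraph.delVertex_att,
            if_pos hhH, if_pos (hDιH h hhH)] at hc
          refine ⟨hhH'.1, ?_⟩
          split_ifs at hc <;> simp_all
        exact (Finset.union_eq_right.mpr hsub).symm
  | snip l c d =>
    obtain ⟨⟨hlH, hlι, v₀, hv1, hv2⟩, hcH, hdH, hcd, -⟩ := hk
    obtain ⟨⟨-, -, v₁, hw1, hw2⟩, hcS, hdS, -, -⟩ := hk'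
    simp only [HalfEdgeGraph.cofaceSource, HalfEdgeGraph.cofaceMap] at hnoelim ⊢
    have hιlH : T.ι l ∈ T.H := hιH l hlH
    have hll : T.ι (T.ι l) = l := hιι l hlH
    rw [HalfEdgeGraph.mem_subdiv_H] at hcS hdS
    push_neg at hcS hdS
    obtain ⟨hc1, hc2, -⟩ := hcS
    obtain ⟨hd1, hd2, -⟩ := hdS
    have hca : c ≠ a := fun h => hcH (h ▸ haH)
    have hcia : c ≠ T.ι a := fun h => hcH (h ▸ hiaH)
    have hda : d ≠ a := fun h => hdH (h ▸ haH)
    have hdia : d ≠ T.ι a := fun h => hdH (h ▸ hiaH)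
    have hcl : c ≠ l := fun h => hcH (h ▸ hlH)
    have hcιl : c ≠ T.ι l := fun h => hcH (h ▸ hιlH)
    have hdl : d ≠ l := fun h => hdH (h ▸ hlH)
    have hdιl : d ≠ T.ι l := fun h => hdH (h ▸ hιlH)
    have hn1l : n₁ ≠ l := fun h => hn1H (h ▸ hlH)
    have hn2l : n₂ ≠ l := fun h => hn2H (h ▸ hlH)
    have hn1ιl : n₁ ≠ T.ι l := fun h => hn1H (h ▸ hιlH)
    have hn2ιl : n₂ ≠ T.ι l := fun h => hn2H (h ▸ hιlH)
    have hla : l ≠ a := by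
      intro h
      rw [h, C.Sιa, C.Sattn1] at hw2
      rw [h, C.Satt_of a haH] at hw1
      injection hw2 with h'
      exact C.hattu a haH (by rw [hw1, ← h'])
    have hlia : l ≠ T.ι a := by
      intro h
      by_cases hia : T.ι a = a
      · exact hla (h.trans hia)
      · rw [h, C.Sιia hia, C.Sattn2] at hw2
        rw [h, C.Satt_of _ hiaH] at hw1
        injection hw2 with h'
        exact C.hattu _ hiaH (by rw [hw1, ← h'])
    have hιla : T.ι l ≠ a := fun h => hlia (by rw [← hll, h])
    have hιlia : T.ι l ≠ T.ι a := fun h => hla (by rw [← hll, h, haa])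
    have hSιl : (T.subdiv a u n₁ n₂).ι l = T.ι l := C.Sι_of l hlH hla hlia
    have hSιιl : (T.subdiv a u n₁ n₂).ι (T.ι l) = l := by
      rw [C.Sι_of _ hιlH hιla hιlia, hll]
    have hSnιa : (T.snip l c d).ι a = T.ι a := by
      rw [HalfEdgeGraph.snip_ι]
      simp [haH, Ne.symm hca, Ne.symm hda, Ne.symm hla, Ne.symm hιla]
    have hGeq : (T.subdiv a u n₁ n₂).snip l c d = (T.snip l c d).subdiv a u n₁ n₂ := by
      refine HalfEdgeGraph.ext' rfl ?_ ?_ ?_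
      · ext h
        rw [HalfEdgeGraph.mem_snip_H, HalfEdgeGraph.mem_subdiv_H, HalfEdgeGraph.mem_subdiv_H, HalfEdgeGraph.mem_snip_H]
        tauto
      · intro h
        rw [HalfEdgeGraph.snip_ι (T.subdiv a u n₁ n₂) l c d h,
          HalfEdgeGraph.subdiv_ι (T.snip l c d) a u n₁ n₂ h, hSιl, hSnιa]
        by_cases e1 : h = c
        · rw [e1]
          simp [HalfEdgeGraph.subdiv_ι, HalfEdgeGraph.snip_ι, HalfEdgeGraph.mem_snip_H, HalfEdgeGraph.mem_subdiv_H,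
            hSnιa, hcl, hca, hc1, hc2, hcia, hcιl]
        by_cases e2 : h = d
        · rw [e2]
          simp [HalfEdgeGraph.subdiv_ι, HalfEdgeGraph.snip_ι, HalfEdgeGraph.mem_snip_H, HalfEdgeGraph.mem_subdiv_H,
            hSnιa, hdl, hda, hd1, hd2, hdia, hdιl, Ne.symm hcd]
        by_cases e3 : h = n₁
        · rw [e3]
          simp [HalfEdgeGraph.subdiv_ι, HalfEdgeGraph.snip_ι, HalfEdgeGraph.mem_snip_H, HalfEdgeGraph.mem_subdiv_H,
            hSnιa, hn1l, hn1ιl, Ne.symm hc1, Ne.symm hd1, hn1a, hn1ia, hn12]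
        by_cases e4 : h = n₂
        · rw [e4]
          simp [HalfEdgeGraph.subdiv_ι, HalfEdgeGraph.snip_ι, HalfEdgeGraph.mem_snip_H, HalfEdgeGraph.mem_subdiv_H,
            hSnιa, hn2l, hn2ιl, Ne.symm hc2, Ne.symm hd2, hn2a, hn2ia, Ne.symm hn12]
        by_cases e5 : h = a
        · rw [e5]
          simp [HalfEdgeGraph.subdiv_ι, HalfEdgeGraph.snip_ι, HalfEdgeGraph.mem_snip_H, HalfEdgeGraph.mem_subdiv_H,
            hSnιa, haH, Ne.symm hla, Ne.symm hca, Ne.symm hιla, Ne.symm hda,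
            Ne.symm hn1a, Ne.symm hn2a]
        by_cases e6 : h = T.ι a
        · rw [e6] at e5 ⊢
          simp [HalfEdgeGraph.subdiv_ι, HalfEdgeGraph.snip_ι, HalfEdgeGraph.mem_snip_H, HalfEdgeGraph.mem_subdiv_H,
            hSnιa, hiaH, Ne.symm hlia, Ne.symm hcia, Ne.symm hιlia, Ne.symm hdia,
            Ne.symm hn1ia, Ne.symm hn2ia, e5]
        by_cases e7 : h = l
        · rw [e7] at e5 e6 ⊢
          simp [HalfEdgeGraph.subdiv_ι, HalfEdgeGraph.snip_ι, HalfEdgeGraph.mem_snip_H, HalfEdgeGraph.mem_subdiv_H,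
            hSnιa, hlH, e5, e6, hn1l, hn2l, Ne.symm hn1l, Ne.symm hn2l, hla, hlia]
        by_cases e8 : h = T.ι l
        · rw [e8] at e5 e6 ⊢
          simp [HalfEdgeGraph.subdiv_ι, HalfEdgeGraph.snip_ι, HalfEdgeGraph.mem_snip_H, HalfEdgeGraph.mem_subdiv_H,
            hSnιa, hιlH, e5, e6, Ne.symm hlι, Ne.symm hcιl, Ne.symm hdιl,
            Ne.symm hn1ιl, Ne.symm hn2ιl, hιla, hιlia]
        by_cases e9 : h ∈ T.H
        · simp [HalfEdgeGraph.subdiv_ι, HalfEdgeGraph.snip_ι, HalfEdgeGraph.mem_snip_H, HalfEdgeGraph.mem_subdiv_H,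
            hSnιa, e1, e2, e3, e4, e5, e6, e7, e8, e9]
        · simp [HalfEdgeGraph.subdiv_ι, HalfEdgeGraph.snip_ι, HalfEdgeGraph.mem_snip_H, HalfEdgeGraph.mem_subdiv_H,
            e1, e2, e3, e4, e9]
      · intro h
        rw [HalfEdgeGraph.snip_att (T.subdiv a u n₁ n₂) l c d h,
          HalfEdgeGraph.subdiv_att (T.snip l c d) a u n₁ n₂ h]
        by_cases e1 : h = c
        · rw [e1]
          simp [HalfEdgeGraph.subdiv_att, HalfEdgeGraph.snip_att, HalfEdgeGraph.mem_snip_H, HalfEdgeGraph.mem_subdiv_H,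
            hc1, hc2]
        by_cases e2 : h = d
        · rw [e2]
          simp [HalfEdgeGraph.subdiv_att, HalfEdgeGraph.snip_att, HalfEdgeGraph.mem_snip_H, HalfEdgeGraph.mem_subdiv_H,
            hd1, hd2]
        by_cases e3 : h = n₁
        · rw [e3]
          simp [HalfEdgeGraph.subdiv_att, HalfEdgeGraph.snip_att, HalfEdgeGraph.mem_snip_H, HalfEdgeGraph.mem_subdiv_H,
            Ne.symm hc1, Ne.symm hd1]
        by_cases e4 : h = n₂
        · rw [e4]
          simp [HalfEdgeGraph.subdiv_att, HalfEdgeGraph.snip_att, HalfEdgeGraph.mem_snip_H, HalfEdgeGraph.mem_subdiv_H,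
            Ne.symm hc2, Ne.symm hd2]
        by_cases e9 : h ∈ T.H
        · simp [HalfEdgeGraph.subdiv_att, HalfEdgeGraph.snip_att, HalfEdgeGraph.mem_snip_H, HalfEdgeGraph.mem_subdiv_H,
            e1, e2, e3, e4, e9]
        · simp [HalfEdgeGraph.subdiv_att, HalfEdgeGraph.snip_att, HalfEdgeGraph.mem_snip_H, HalfEdgeGraph.mem_subdiv_H,
            e1, e2, e3, e4, e9]
    refine ⟨hGeq, ?_, ?_⟩
    · intro h _
      by_cases e1 : h = c <;> by_cases e2 : h = d <;> by_cases e3 : h = n₁ <;>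
        by_cases e4 : h = n₂ <;>
        simp_all [PreGMap.comp, HalfEdgeGraph.cosnip, HalfEdgeGraph.codegeneracy, hSιl, hSnιa,
          Ne.symm hn1ιl, Ne.symm hn2ιl, Ne.symm hn1l, Ne.symm hn2l, hc1, hc2, hd1, hd2,
          Ne.symm hca, Ne.symm hda, Ne.symm hcia, Ne.symm hdia, hcd, Ne.symm hcd]
    · intro v hv
      rw [hGeq, HalfEdgeGraph.subdiv_V, HalfEdgeGraph.snip_V, Finset.mem_insert] at hv
      rcases hv with rfl | hvV
      · have hga : (T.cosnip l c d).e a = a := by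
          simp [HalfEdgeGraph.cosnip, Ne.symm hca, Ne.symm hda]
        have hgia : (T.cosnip l c d).e ((T.snip l c d).ι a) = (T.snip l c d).ι a := by
          rw [hSnιa]; simp [HalfEdgeGraph.cosnip, Ne.symm hcia, Ne.symm hdia]
        rw [C.comp_vimg_u _ rfl, comp_vimg_u_right _ _ hga hgia, hSnιa]
      · have hvu : v ≠ u := fun h => huV (h ▸ hvV)
        rw [C.comp_vimg_corolla _ v hvu rfl, comp_vimg_v_right _ _ v hvu]
        refine Prod.ext rfl ?_
        refine (Finset.union_eq_right.mpr ?_).symm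
        intro h hh
        rw [Finset.mem_image] at hh
        obtain ⟨g', hg', rfl⟩ := hh
        rw [HalfEdgeGraph.mem_corolla₂] at hg'
        obtain ⟨hgH, hgc⟩ := hg'
        rw [HalfEdgeGraph.mem_snip_H] at hgH
        rw [HalfEdgeGraph.mem_corolla₂]
        rcases hgH with hg1 | hg1 | hgH
        · -- g' = c
          rw [hg1] at hgc ⊢
          simp [HalfEdgeGraph.snip_att, HalfEdgeGraph.snip_ι, hcl, Ne.symm hcl, Ne.symm hdl, hlH,
            hcd] at hgc
          have hec : (T.cosnip l c d).e c = T.ι l := by simp [HalfEdgeGraph.cosnip]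
          rw [hec]
          exact ⟨hιlH, Or.inr (by rw [hll]; exact hgc)⟩
        · -- g' = d
          rw [hg1] at hgc ⊢
          simp [HalfEdgeGraph.snip_att, HalfEdgeGraph.snip_ι, hdl, hdιl, Ne.symm hcd, Ne.symm hcιl,
            Ne.symm hdιl, hιlH] at hgc
          have hec : (T.cosnip l c d).e d = l := by simp [HalfEdgeGraph.cosnip, Ne.symm hcd]
          rw [hec]
          exact ⟨hlH, Or.inr hgc⟩
        · -- g' ∈ T.H
          have hnec : g' ≠ c := fun e => hcH (e ▸ hgH)
          have hned : g' ≠ d := fun e => hdH (e ▸ hgH)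
          have hec : (T.cosnip l c d).e g' = g' := by simp [HalfEdgeGraph.cosnip, hnec, hned]
          rw [hec]
          refine ⟨hgH, ?_⟩
          by_cases hgl : g' = l
          · rw [hgl] at hgc ⊢
            simp [HalfEdgeGraph.snip_att, HalfEdgeGraph.snip_ι, Ne.symm hcl, Ne.symm hdl, hlH] at hgc
            exact Or.inl hgc
          by_cases hgιl : g' = T.ι l
          · rw [hgιl] at hgc ⊢
            simp [HalfEdgeGraph.snip_att, HalfEdgeGraph.snip_ι, Ne.symm hcιl, Ne.symm hdιl, hιlH,
              hlι, Ne.symm hlι, hcd] at hgc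
            exact Or.inl hgc
          · have hgιH : T.ι g' ∈ T.H := hιH g' hgH
            have hnιc : T.ι g' ≠ c := fun e => hcH (e ▸ hgιH)
            have hnιd : T.ι g' ≠ d := fun e => hdH (e ▸ hgιH)
            simp [HalfEdgeGraph.snip_att, HalfEdgeGraph.snip_ι, hgH, hgιH, hnec, hned, hgl, hgιl,
              hnιc, hnιd] at hgc
            exact hgc
end

section
/- Let G be a graph, p an outer vertex of G, and q a vertex adjacent to p via the edge pq. Then the codegeneracy and outer coface relation holds: σ^p ∘ δ^q = δ^q ∘ σ^{pq}; that is, deleting the outer vertex and then collapsing commutes with first collapsing the subdivided edge and then deleting, as graphical maps. -/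
section Aux

lemma HalfEdgeGraph.ext'_s18 {G₁ G₂ : HalfEdgeGraph} (h1 : G₁.V = G₂.V) (h2 : G₁.H = G₂.H)
    (h3 : ∀ x, G₁.ι x = G₂.ι x) (h4 : ∀ x, G₁.att x = G₂.att x) : G₁ = G₂ := by
  cases G₁; cases G₂
  simp_all only [HalfEdgeGraph.mk.injEq, and_true, true_and]
  exact ⟨funext h3, funext h4⟩

lemma HalfEdgeGraph.mem_delVertex_H_s18 {G : HalfEdgeGraph} {q h : ℕ} :
    h ∈ (G.delVertex q).H ↔ h ∈ G.H ∧
      ¬ ((G.att h = some q ∨ G.att (G.ι h) = some q) ∧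
         (G.att h = some q ∨ G.att h = none) ∧
         (G.att (G.ι h) = some q ∨ G.att (G.ι h) = none)) :=
  Finset.mem_filter

lemma HalfEdgeGraph.mem_subdiv_H_s18 {G : HalfEdgeGraph} {b u n₁ n₂ h : ℕ} :
    h ∈ (G.subdiv b u n₁ n₂).H ↔ h = n₁ ∨ h = n₂ ∨ h ∈ G.H := by
  simp [HalfEdgeGraph.subdiv]

lemma HalfEdgeGraph.delVertex_ι_mem {G : HalfEdgeGraph} {q h : ℕ} (hh : h ∈ (G.delVertex q).H) :
    (G.delVertex q).ι h = G.ι h := if_pos hh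

lemma HalfEdgeGraph.delVertex_ι_not {G : HalfEdgeGraph} {q h : ℕ} (hh : h ∉ (G.delVertex q).H) :
    (G.delVertex q).ι h = h := if_neg hh

lemma HalfEdgeGraph.delVertex_att_mem {G : HalfEdgeGraph} {q h : ℕ} (hh : h ∈ (G.delVertex q).H) :
    (G.delVertex q).att h = if G.att h = some q then none else G.att h := if_pos hh

lemma HalfEdgeGraph.delVertex_att_not {G : HalfEdgeGraph} {q h : ℕ} (hh : h ∉ (G.delVertex q).H) :
    (G.delVertex q).att h = none := if_neg hh

lemma HalfEdgeGraph.subdiv_ι_mem {G : HalfEdgeGraph} {b u n₁ n₂ h : ℕ} (hh : h ∈ (G.subdiv b u n₁ n₂).H) :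
    (G.subdiv b u n₁ n₂).ι h =
      (if h = b then n₁ else if h = n₁ then b else
       if h = n₂ then (if G.ι b = b then n₂ else G.ι b) else
       if h = G.ι b then n₂ else G.ι h) := if_pos hh

lemma HalfEdgeGraph.subdiv_ι_not {G : HalfEdgeGraph} {b u n₁ n₂ h : ℕ} (hh : h ∉ (G.subdiv b u n₁ n₂).H) :
    (G.subdiv b u n₁ n₂).ι h = h := if_neg hh

lemma HalfEdgeGraph.subdiv_att_mem {G : HalfEdgeGraph} {b u n₁ n₂ h : ℕ} (hh : h ∈ (G.subdiv b u n₁ n₂).H) :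
    (G.subdiv b u n₁ n₂).att h =
      (if h = n₁ ∨ h = n₂ then some u else G.att h) := if_pos hh

lemma HalfEdgeGraph.subdiv_att_not {G : HalfEdgeGraph} {b u n₁ n₂ h : ℕ} (hh : h ∉ (G.subdiv b u n₁ n₂).H) :
    (G.subdiv b u n₁ n₂).att h = none := if_neg hh

lemma HalfEdgeGraph.mem_corolla2 {G : HalfEdgeGraph} {v h : ℕ} :
    h ∈ (G.corolla v).2 ↔ h ∈ G.H ∧ (G.att h = some v ∨ G.att (G.ι h) = some v) :=
  Finset.mem_filter

lemma HalfEdgeGraph.corolla_fst (G : HalfEdgeGraph) (v : ℕ) : (G.corolla v).1 = {v} := rfl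

end Aux

/-- Let `p` be a vertex of `G` adjacent to the outer vertex
`q` via the edge `b = pq`.  Then the codegeneracy and outer coface relation
holds: `σ^p ∘ δ^q = δ^q ∘ σ^{pq}`, i.e. the square
`(G/q)_{pq} = (G_{pq})/q → G` commutes: deleting the outer vertex and then
collapsing the subdivided edge agrees with first collapsing and then deleting,
as graphical maps. -/
theorem codegeneracy_outer_commute (G : HalfEdgeGraph) (hG : G.Wf) (p q b u n₁ n₂ : ℕ)
    (hq : G.IsOuterVertex q) (hp : p ∈ G.V) (hpq : p ≠ q)
    (hb : b ∈ G.H) (hbp : G.att b = some p) (hbq : G.att (G.ι b) = some q)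
    (hdeg : G.IsDegen b u n₁ n₂) :
    (G.subdiv b u n₁ n₂).delVertex q = (G.delVertex q).subdiv b u n₁ n₂ ∧
    PreGMap.EqOn ((G.subdiv b u n₁ n₂).delVertex q)
      ((G.outerCoface q).comp ((G.delVertex q).codegeneracy b u n₁ n₂))
      ((G.codegeneracy b u n₁ n₂).comp
        ((G.subdiv b u n₁ n₂).outerCoface q)) := by
  obtain ⟨hι, hinv, hatt, -⟩ := hG
  obtain ⟨hbH, huV, hn1H, hn2H, hn12⟩ := hdeg
  have hιb : G.ι b ∈ G.H := hι b hb
  have hiib : G.ι (G.ι b) = b := hinv b hb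
  have hbne : b ≠ G.ι b := by
    intro h; rw [← h, hbp] at hbq; exact hpq (Option.some.inj hbq)
  have hn1b : n₁ ≠ b := fun h => hn1H (h ▸ hb)
  have hn2b : n₂ ≠ b := fun h => hn2H (h ▸ hb)
  have hn1ib : n₁ ≠ G.ι b := fun h => hn1H (h ▸ hιb)
  have hn2ib : n₂ ≠ G.ι b := fun h => hn2H (h ▸ hιb)
  have huq : u ≠ q := fun h => huV (h ▸ hq.1)
  have hup : u ≠ p := fun h => huV (h ▸ hp)
  have hbD : b ∈ (G.delVertex q).H :=
    HalfEdgeGraph.mem_delVertex_H_s18.mpr ⟨hb, by rw [hbp, hbq]; simp [hpq]⟩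
  have hιbD : G.ι b ∈ (G.delVertex q).H :=
    HalfEdgeGraph.mem_delVertex_H_s18.mpr ⟨hιb, by rw [hiib, hbp, hbq]; simp [hpq]⟩
  have hDιb : (G.delVertex q).ι b = G.ι b := HalfEdgeGraph.delVertex_ι_mem hbD
  have hmemS : ∀ h ∈ G.H, h ∈ (G.subdiv b u n₁ n₂).H := fun h hh =>
    HalfEdgeGraph.mem_subdiv_H_s18.mpr (Or.inr (Or.inr hh))
  have hSattG : ∀ h ∈ G.H, (G.subdiv b u n₁ n₂).att h = G.att h := by
    intro h hh
    rw [HalfEdgeGraph.subdiv_att_mem (hmemS h hh), if_neg]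
    rintro (rfl | rfl)
    · exact hn1H hh
    · exact hn2H hh
  have hSattn1 : (G.subdiv b u n₁ n₂).att n₁ = some u := by
    rw [HalfEdgeGraph.subdiv_att_mem (HalfEdgeGraph.mem_subdiv_H_s18.mpr (Or.inl rfl))]; simp
  have hSattn2 : (G.subdiv b u n₁ n₂).att n₂ = some u := by
    rw [HalfEdgeGraph.subdiv_att_mem (HalfEdgeGraph.mem_subdiv_H_s18.mpr (Or.inr (Or.inl rfl)))]; simp
  have hSιb : (G.subdiv b u n₁ n₂).ι b = n₁ := by
    rw [HalfEdgeGraph.subdiv_ι_mem (hmemS b hb)]; simp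
  have hSιn1 : (G.subdiv b u n₁ n₂).ι n₁ = b := by
    rw [HalfEdgeGraph.subdiv_ι_mem (HalfEdgeGraph.mem_subdiv_H_s18.mpr (Or.inl rfl))]; simp [hn1b]
  have hSιn2 : (G.subdiv b u n₁ n₂).ι n₂ = G.ι b := by
    rw [HalfEdgeGraph.subdiv_ι_mem (HalfEdgeGraph.mem_subdiv_H_s18.mpr (Or.inr (Or.inl rfl)))]
    simp [hn2b, hn12.symm, Ne.symm hbne]
  have hSιιb : (G.subdiv b u n₁ n₂).ι (G.ι b) = n₂ := by
    rw [HalfEdgeGraph.subdiv_ι_mem (hmemS _ hιb)]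
    simp [Ne.symm hbne, Ne.symm hn1ib, Ne.symm hn2ib]
  have hSιG : ∀ h ∈ G.H, h ≠ b → h ≠ G.ι b → (G.subdiv b u n₁ n₂).ι h = G.ι h := by
    intro h hh h1 h2
    have e1 : h ≠ n₁ := fun e => hn1H (e ▸ hh)
    have e2 : h ≠ n₂ := fun e => hn2H (e ▸ hh)
    rw [HalfEdgeGraph.subdiv_ι_mem (hmemS h hh)]
    simp [h1, h2, e1, e2]
  have hgen : ∀ h ∈ G.H, h ≠ b → h ≠ G.ι b →
      (G.subdiv b u n₁ n₂).att ((G.subdiv b u n₁ n₂).ι h) = G.att (G.ι h) := by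
    intro h hh h1 h2
    have hih : G.ι h ∈ G.H := hι h hh
    rw [hSιG h hh h1 h2, hSattG _ hih]
  have hH : ((G.subdiv b u n₁ n₂).delVertex q).H = ((G.delVertex q).subdiv b u n₁ n₂).H := by
    ext h
    simp only [HalfEdgeGraph.mem_delVertex_H_s18, HalfEdgeGraph.mem_subdiv_H_s18]
    constructor
    · rintro ⟨hhS, hrem⟩
      rcases hhS with h1 | h1 | hhG
      · exact Or.inl h1
      · exact Or.inr (Or.inl h1)
      · refine Or.inr (Or.inr ⟨hhG, fun hc => ?_⟩)
        by_cases h1 : h = b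
        · subst h; rw [hbp, hbq] at hc; simp [hpq] at hc
        by_cases h2 : h = G.ι b
        · rw [h2, hiib, hbp, hbq] at hc; simp [hpq] at hc
        exact hrem (by rw [hSattG h hhG, hgen h hhG h1 h2]; exact hc)
    · rintro (h1 | h1 | ⟨hhG, hrem⟩)
      · subst h
        refine ⟨Or.inl rfl, ?_⟩
        rw [hSιn1, hSattn1, hSattG b hb, hbp]
        simp [huq, hpq]
      · subst h
        refine ⟨Or.inr (Or.inl rfl), ?_⟩
        rw [hSιn2, hSattn2, hSattG _ hιb, hbq]
        simp [huq]
      · refine ⟨Or.inr (Or.inr hhG), ?_⟩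
        by_cases h1 : h = b
        · subst h
          rw [hSιb, hSattG b hb, hSattn1, hbp]
          simp [hpq, huq]
        by_cases h2 : h = G.ι b
        · rw [h2, hSιιb, hSattG _ hιb, hSattn2, hbq]
          simp [huq]
        intro hc
        exact hrem (by rw [hSattG h hhG, hgen h hhG h1 h2] at hc; exact hc)
  have key : (G.subdiv b u n₁ n₂).delVertex q = (G.delVertex q).subdiv b u n₁ n₂ := by
    refine HalfEdgeGraph.ext'_s18 ?_ hH ?_ ?_
    · exact Finset.erase_insert_of_ne huq
    · intro x
      by_cases hx : x ∈ ((G.subdiv b u n₁ n₂).delVertex q).H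
      · have hxR : x ∈ ((G.delVertex q).subdiv b u n₁ n₂).H := hH ▸ hx
        have hxS : x ∈ (G.subdiv b u n₁ n₂).H := (HalfEdgeGraph.mem_delVertex_H_s18.mp hx).1
        rw [HalfEdgeGraph.delVertex_ι_mem hx, HalfEdgeGraph.subdiv_ι_mem hxS, HalfEdgeGraph.subdiv_ι_mem hxR, hDιb]
        by_cases e1 : x = b
        · simp [e1]
        by_cases e2 : x = n₁
        · simp [e1, e2]
        by_cases e3 : x = n₂
        · simp [e1, e2, e3]
        by_cases e4 : x = G.ι b
        · simp [e1, e2, e3, e4]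
        · have hxD : x ∈ (G.delVertex q).H := by
            rcases HalfEdgeGraph.mem_subdiv_H_s18.mp hxR with hd | hd | hd
            exacts [absurd hd e2, absurd hd e3, hd]
          simp [e1, e2, e3, e4, HalfEdgeGraph.delVertex_ι_mem hxD]
      · have hxR : x ∉ ((G.delVertex q).subdiv b u n₁ n₂).H := hH ▸ hx
        rw [HalfEdgeGraph.delVertex_ι_not hx, HalfEdgeGraph.subdiv_ι_not hxR]
    · intro x
      by_cases hx : x ∈ ((G.subdiv b u n₁ n₂).delVertex q).H
      · have hxR : x ∈ ((G.delVertex q).subdiv b u n₁ n₂).H := hH ▸ hx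
        have hxS : x ∈ (G.subdiv b u n₁ n₂).H := (HalfEdgeGraph.mem_delVertex_H_s18.mp hx).1
        rw [HalfEdgeGraph.delVertex_att_mem hx, HalfEdgeGraph.subdiv_att_mem hxR]
        rcases HalfEdgeGraph.mem_subdiv_H_s18.mp hxS with hx1 | hx1 | hxG
        · subst x; rw [hSattn1]; simp [huq]
        · subst x; rw [hSattn2]; simp [huq]
        · have hxn1 : x ≠ n₁ := fun e => hn1H (e ▸ hxG)
          have hxn2 : x ≠ n₂ := fun e => hn2H (e ▸ hxG)
          have hxD : x ∈ (G.delVertex q).H := by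
            rcases HalfEdgeGraph.mem_subdiv_H_s18.mp hxR with hd | hd | hd
            exacts [absurd hd hxn1, absurd hd hxn2, hd]
          rw [hSattG x hxG, if_neg (show ¬(x = n₁ ∨ x = n₂) by simp [hxn1, hxn2]),
            HalfEdgeGraph.delVertex_att_mem hxD]
      · have hxR : x ∉ ((G.delVertex q).subdiv b u n₁ n₂).H := hH ▸ hx
        rw [HalfEdgeGraph.delVertex_att_not hx, HalfEdgeGraph.subdiv_att_not hxR]
  refine ⟨key, ?_, ?_⟩
  · intro h _
    simp [PreGMap.comp, HalfEdgeGraph.outerCoface, HalfEdgeGraph.codegeneracy, hDιb]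
  · intro v hv
    have hv2 : v ∈ (insert u G.V).erase q := hv
    obtain ⟨hvq, hv3⟩ := Finset.mem_erase.mp hv2
    by_cases hvu : v = u
    · subst hvu
      have hLf : ((G.delVertex q).codegeneracy b v n₁ n₂).vimg v = (∅, ({b, G.ι b} : Finset ℕ)) := by
        rw [show ((G.delVertex q).codegeneracy b v n₁ n₂).vimg v =
          (∅, ({b, (G.delVertex q).ι b} : Finset ℕ)) from if_pos rfl, hDιb]
      have hgu : (G.codegeneracy b v n₁ n₂).vimg v = (∅, ({b, G.ι b} : Finset ℕ)) := if_pos rfl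
      have hC : ((G.subdiv b v n₁ n₂).corolla v).2 = ({n₁, n₂, b, G.ι b} : Finset ℕ) := by
        ext x
        rw [HalfEdgeGraph.mem_corolla2]
        simp only [Finset.mem_insert, Finset.mem_singleton]
        constructor
        · rintro ⟨hxS, hx⟩
          rcases HalfEdgeGraph.mem_subdiv_H_s18.mp hxS with h1 | h1 | hxG
          · exact Or.inl h1
          · exact Or.inr (Or.inl h1)
          · by_cases h1 : x = b
            · exact Or.inr (Or.inr (Or.inl h1))
            by_cases h2 : x = G.ι b
            · exact Or.inr (Or.inr (Or.inr h2))
            rcases hx with hx | hx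
            · rw [hSattG x hxG] at hx
              exact absurd (hatt x hxG v hx) huV
            · rw [hgen x hxG h1 h2] at hx
              exact absurd (hatt _ (hι x hxG) v hx) huV
        · rintro (h1 | h1 | h1 | h1)
          · subst x; exact ⟨HalfEdgeGraph.mem_subdiv_H_s18.mpr (Or.inl rfl), Or.inl hSattn1⟩
          · subst x; exact ⟨HalfEdgeGraph.mem_subdiv_H_s18.mpr (Or.inr (Or.inl rfl)), Or.inl hSattn2⟩
          · subst x; exact ⟨hmemS b hb, Or.inr (by rw [hSιb, hSattn1])⟩
          · subst x; exact ⟨hmemS _ hιb, Or.inr (by rw [hSιιb, hSattn2])⟩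
      have hCu : (G.subdiv b v n₁ n₂).corolla v = ({v}, ({n₁, n₂, b, G.ι b} : Finset ℕ)) :=
        Prod.ext rfl hC
      have hsub : ({n₁, n₂, b, G.ι b} : Finset ℕ).image (G.codegeneracy b v n₁ n₂).e ⊆
          ({b, G.ι b} : Finset ℕ) := by
        intro x hx
        obtain ⟨y, hy, rfl⟩ := Finset.mem_image.mp hx
        simp only [Finset.mem_insert, Finset.mem_singleton] at hy
        rcases hy with h1 | h1 | h1 | h1
        · subst y; simp [HalfEdgeGraph.codegeneracy]
        · subst y; simp [HalfEdgeGraph.codegeneracy, Ne.symm hn12]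
        · subst y; simp [HalfEdgeGraph.codegeneracy, Ne.symm hn1b, Ne.symm hn2b]
        · subst y; simp [HalfEdgeGraph.codegeneracy, Ne.symm hn1ib, Ne.symm hn2ib]
      simp only [PreGMap.comp, HalfEdgeGraph.outerCoface, hLf, hgu, hCu, Finset.biUnion_empty,
        Finset.image_id, Finset.union_empty, Finset.singleton_biUnion, Prod.mk.injEq]
      refine ⟨?_, ?_⟩
      · trivial
      · exact (Finset.union_eq_right.mpr hsub).symm
    · have hvG : v ∈ G.V := by
        rcases Finset.mem_insert.mp hv3 with h | h
        · exact absurd h hvu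
        · exact h
      have hLfv : ((G.delVertex q).codegeneracy b u n₁ n₂).vimg v = (G.delVertex q).corolla v :=
        if_neg hvu
      have hgv : (G.codegeneracy b u n₁ n₂).vimg v = G.corolla v := if_neg hvu
      have hA : ((G.delVertex q).corolla v).2 ⊆ (G.corolla v).2 := by
        intro x hx
        obtain ⟨hxD, hx2⟩ := HalfEdgeGraph.mem_corolla2.mp hx
        obtain ⟨hxG, -⟩ := HalfEdgeGraph.mem_delVertex_H_s18.mp hxD
        refine HalfEdgeGraph.mem_corolla2.mpr ⟨hxG, ?_⟩
        rcases hx2 with hx2 | hx2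
        · rw [HalfEdgeGraph.delVertex_att_mem hxD] at hx2
          left
          by_cases e : G.att x = some q
          · rw [if_pos e] at hx2; exact absurd hx2 (by simp)
          · rwa [if_neg e] at hx2
        · rw [HalfEdgeGraph.delVertex_ι_mem hxD] at hx2
          right
          by_cases hm : G.ι x ∈ (G.delVertex q).H
          · rw [HalfEdgeGraph.delVertex_att_mem hm] at hx2
            by_cases e : G.att (G.ι x) = some q
            · rw [if_pos e] at hx2; exact absurd hx2 (by simp)
            · rwa [if_neg e] at hx2
          · rw [HalfEdgeGraph.delVertex_att_not hm] at hx2; exact absurd hx2 (by simp)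
      have hB : ((G.subdiv b u n₁ n₂).corolla v).2.image (G.codegeneracy b u n₁ n₂).e ⊆
          (G.corolla v).2 := by
        intro x hx
        obtain ⟨y, hy, rfl⟩ := Finset.mem_image.mp hx
        obtain ⟨hyS, hy2⟩ := HalfEdgeGraph.mem_corolla2.mp hy
        rcases HalfEdgeGraph.mem_subdiv_H_s18.mp hyS with h1 | h1 | hyG
        · subst y
          have he : (G.codegeneracy b u n₁ n₂).e n₁ = G.ι b := by simp [HalfEdgeGraph.codegeneracy]
          rw [he]
          rcases hy2 with hy2 | hy2
          · rw [hSattn1] at hy2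
            exact absurd (Option.some.inj hy2) (fun e => huV (e ▸ hvG))
          · rw [hSιn1, hSattG b hb, hbp] at hy2
            exact HalfEdgeGraph.mem_corolla2.mpr ⟨hιb, Or.inr (by rw [hiib, hbp, hy2])⟩
        · subst y
          rcases hy2 with hy2 | hy2
          · rw [hSattn2] at hy2
            exact absurd (Option.some.inj hy2) (fun e => huV (e ▸ hvG))
          · rw [hSιn2, hSattG _ hιb, hbq] at hy2
            exact absurd (Option.some.inj hy2).symm hvq
        · by_cases h1 : y = b
          · subst y
            have he : (G.codegeneracy b u n₁ n₂).e b = b := by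
              simp [HalfEdgeGraph.codegeneracy, Ne.symm hn1b, Ne.symm hn2b]
            rw [he]
            rcases hy2 with hy2 | hy2
            · rw [hSattG b hb] at hy2
              exact HalfEdgeGraph.mem_corolla2.mpr ⟨hb, Or.inl hy2⟩
            · rw [hSιb, hSattn1] at hy2
              exact absurd (Option.some.inj hy2) (fun e => huV (e ▸ hvG))
          by_cases h2 : y = G.ι b
          · rcases hy2 with hy2 | hy2
            · rw [h2, hSattG _ hιb, hbq] at hy2
              exact absurd (Option.some.inj hy2).symm hvq
            · rw [h2, hSιιb, hSattn2] at hy2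
              exact absurd (Option.some.inj hy2) (fun e => huV (e ▸ hvG))
          · have hyn1 : y ≠ n₁ := fun e => hn1H (e ▸ hyG)
            have hyn2 : y ≠ n₂ := fun e => hn2H (e ▸ hyG)
            have he : (G.codegeneracy b u n₁ n₂).e y = y := by
              simp [HalfEdgeGraph.codegeneracy, hyn1, hyn2]
            rw [he]
            rcases hy2 with hy2 | hy2
            · rw [hSattG y hyG] at hy2
              exact HalfEdgeGraph.mem_corolla2.mpr ⟨hyG, Or.inl hy2⟩
            · rw [hgen y hyG h1 h2] at hy2
              exact HalfEdgeGraph.mem_corolla2.mpr ⟨hyG, Or.inr hy2⟩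
      simp only [PreGMap.comp, HalfEdgeGraph.outerCoface, hLfv, hgv, HalfEdgeGraph.corolla_fst,
        Finset.singleton_biUnion, Finset.image_id, Prod.mk.injEq]
      refine ⟨?_, ?_⟩
      · trivial
      · rw [Finset.union_eq_right.mpr hA, Finset.union_eq_right.mpr hB]
end
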